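/- arXiv:2508.00644 — 3 statements merged into one kernel-verified Lean document; each statement's English description precedes it below -/
import Mathlib

section
/- Let A be an additive category, (X, d) a ℤ-indexed cochain complex in A, and η = (η^n : X^n → X^n) a family of morphisms, not assumed to commute with d, such that η ∘ η = 0 and η ∘ (dη − ηd) = 0 componentwise, where (dη)^n = d^n ∘ η^n and (ηd)^n = η^{n+1} ∘ d^n. Then d + dη − ηd = (1 − η) ∘ d ∘ (1 + η), the family d + dη − ηd is again a differential on X, and 1 + η defines an isomorphism of cochain complexes from (X, d + dη − ηd) to (X, d), with inverse 1 − η. -/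
open CategoryTheory CategoryTheory.Limits

variable {A : Type*} [Category A] [Preadditive A]

/-- The degreewise maps `(d + dη − ηd)^n : X^n ⟶ X^{n+1}`. -/
def dPrime (X : CochainComplex A ℤ) (η : ∀ n : ℤ, X.X n ⟶ X.X n) (n : ℤ) :
    X.X n ⟶ X.X (n + 1) :=
  X.d n (n + 1) + η n ≫ X.d n (n + 1) - X.d n (n + 1) ≫ η (n + 1)

/-- Clean-up Lemma: if `η ∘ η = 0` and `η ∘ (dη − ηd) = 0` componentwise, then
`d + dη − ηd = (1 − η) ∘ d ∘ (1 + η)` is again a differential on `X`, and `1 + η`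
defines an isomorphism of cochain complexes from `(X, d + dη − ηd)` to `(X, d)` with
inverse `1 − η`. -/
theorem cleanup_lemma (X : CochainComplex A ℤ) (η : ∀ n : ℤ, X.X n ⟶ X.X n)
    (hη2 : ∀ n : ℤ, η n ≫ η n = 0)
    (hη3 : ∀ n : ℤ, (η n ≫ X.d n (n + 1) - X.d n (n + 1) ≫ η (n + 1)) ≫ η (n + 1) = 0) :
    (∀ n : ℤ, dPrime X η n =
        (𝟙 (X.X n) + η n) ≫ X.d n (n + 1) ≫ (𝟙 (X.X (n + 1)) - η (n + 1))) ∧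
    ∃ hsq : ∀ n : ℤ, dPrime X η n ≫ dPrime X η (n + 1) = 0,
      ∃ φ : (CochainComplex.of (fun n => X.X n) (dPrime X η) hsq) ≅ X,
        (∀ n : ℤ, φ.hom.f n = 𝟙 (X.X n) + η n) ∧
        (∀ n : ℤ, φ.inv.f n = 𝟙 (X.X n) - η n) := by
  have key : ∀ n : ℤ, dPrime X η n =
      (𝟙 (X.X n) + η n) ≫ X.d n (n + 1) ≫ (𝟙 (X.X (n + 1)) - η (n + 1)) := by
    intro n
    have h3 := hη3 n
    have h2 := hη2 (n + 1)
    simp only [Preadditive.sub_comp, Preadditive.comp_sub, Preadditive.add_comp,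
      Category.comp_id, Category.id_comp, Category.assoc, dPrime] at *
    simp only [h2, comp_zero, sub_zero] at h3
    rw [h3]
    abel
  have hsq : ∀ n : ℤ, dPrime X η n ≫ dPrime X η (n + 1) = 0 := by
    intro n
    rw [key, key]
    have cancel : (𝟙 (X.X (n + 1)) - η (n + 1)) ≫ (𝟙 (X.X (n + 1)) + η (n + 1)) =
        𝟙 (X.X (n + 1)) := by
      simp [Preadditive.sub_comp, Preadditive.comp_add, hη2]
    simp only [Category.assoc, reassoc_of% cancel]
    simp [X.d_comp_d_assoc]
  refine ⟨key, hsq, ?_⟩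
  have cancel1 : ∀ n : ℤ, (𝟙 (X.X n) + η n) ≫ (𝟙 (X.X n) - η n) = 𝟙 (X.X n) := by
    intro n; simp [Preadditive.add_comp, Preadditive.comp_sub, hη2]
  have cancel2 : ∀ n : ℤ, (𝟙 (X.X n) - η n) ≫ (𝟙 (X.X n) + η n) = 𝟙 (X.X n) := by
    intro n; simp [Preadditive.sub_comp, Preadditive.comp_add, hη2]
  refine ⟨{
    hom := {
      f := fun n => 𝟙 (X.X n) + η n
      comm' := by
        rintro i j (rfl : i + 1 = j)
        rw [show (CochainComplex.of (fun n => X.X n) (dPrime X η) hsq).d i (i + 1) = dPrime X η i from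
          CochainComplex.of_d _ _ i, key i]
        simp only [Category.assoc, reassoc_of% cancel2 (i + 1)]
        simp [Preadditive.add_comp, hη2] }
    inv := {
      f := fun n => 𝟙 (X.X n) - η n
      comm' := by
        rintro i j (rfl : i + 1 = j)
        rw [show (CochainComplex.of (fun n => X.X n) (dPrime X η) hsq).d i (i + 1) = dPrime X η i from
          CochainComplex.of_d _ _ i, key i]
        simp only [Category.assoc]
        rw [reassoc_of% cancel2 i] }
    hom_inv_id := by ext n; simp [cancel1 n]
    inv_hom_id := by ext n; simp [cancel2 n] }, fun n => rfl, fun n => rfl⟩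
end

section
/- In B the following identities hold: G_∘S_• = S_•G_•, G_•S_∘ = S_∘G_∘, G_•D_• = D_•G_• = −D_•D_•, and G_∘D_∘ = D_∘G_∘ = −D_∘D_∘. In particular, G_• commutes with every element of 1_•B1_• and G_∘ commutes with every element of 1_∘B1_∘. -/
/-- Generators of the Bar-Natan algebra: the two vertex idempotents and the four arrows. -/
inductive BNGen : Type
  | eb | ec | db | dc | sb | sc
  deriving DecidableEq

/-- The relations presenting the Bar-Natan algebra as a quotient of the free algebra on
the vertex idempotents and arrows of the quiver: the path-algebra relations for the
two-vertex quiver, together with the four relations `D∘S• = S•D• = D•S∘ = S∘D∘ = 0`. -/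
inductive BNRel (R : Type*) [CommRing R] :
    FreeAlgebra R BNGen → FreeAlgebra R BNGen → Prop
  | idem_b : BNRel R (FreeAlgebra.ι R BNGen.eb * FreeAlgebra.ι R BNGen.eb) (FreeAlgebra.ι R BNGen.eb)
  | idem_c : BNRel R (FreeAlgebra.ι R BNGen.ec * FreeAlgebra.ι R BNGen.ec) (FreeAlgebra.ι R BNGen.ec)
  | orth_bc : BNRel R (FreeAlgebra.ι R BNGen.eb * FreeAlgebra.ι R BNGen.ec) 0
  | orth_cb : BNRel R (FreeAlgebra.ι R BNGen.ec * FreeAlgebra.ι R BNGen.eb) 0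
  | sum_idem : BNRel R (FreeAlgebra.ι R BNGen.eb + FreeAlgebra.ι R BNGen.ec) 1
  | typ_sb : BNRel R (FreeAlgebra.ι R BNGen.ec * FreeAlgebra.ι R BNGen.sb * FreeAlgebra.ι R BNGen.eb) (FreeAlgebra.ι R BNGen.sb)
  | typ_sc : BNRel R (FreeAlgebra.ι R BNGen.eb * FreeAlgebra.ι R BNGen.sc * FreeAlgebra.ι R BNGen.ec) (FreeAlgebra.ι R BNGen.sc)
  | typ_db : BNRel R (FreeAlgebra.ι R BNGen.eb * FreeAlgebra.ι R BNGen.db * FreeAlgebra.ι R BNGen.eb) (FreeAlgebra.ι R BNGen.db)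
  | typ_dc : BNRel R (FreeAlgebra.ι R BNGen.ec * FreeAlgebra.ι R BNGen.dc * FreeAlgebra.ι R BNGen.ec) (FreeAlgebra.ι R BNGen.dc)
  | rel_DcSb : BNRel R (FreeAlgebra.ι R BNGen.dc * FreeAlgebra.ι R BNGen.sb) 0
  | rel_SbDb : BNRel R (FreeAlgebra.ι R BNGen.sb * FreeAlgebra.ι R BNGen.db) 0
  | rel_DbSc : BNRel R (FreeAlgebra.ι R BNGen.db * FreeAlgebra.ι R BNGen.sc) 0
  | rel_ScDc : BNRel R (FreeAlgebra.ι R BNGen.sc * FreeAlgebra.ι R BNGen.dc) 0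

/-- The Bar-Natan algebra `B` over `R`. -/
abbrev BN (R : Type*) [CommRing R] : Type _ := RingQuot (BNRel R)

noncomputable section

/-- The image in `B` of a generator. -/
def BNgen (R : Type*) [CommRing R] (g : BNGen) : BN R :=
  RingQuot.mkAlgHom R (BNRel R) (FreeAlgebra.ι R g)

def eB (R : Type*) [CommRing R] : BN R := BNgen R BNGen.eb
def eC (R : Type*) [CommRing R] : BN R := BNgen R BNGen.ec
def Db (R : Type*) [CommRing R] : BN R := BNgen R BNGen.db
def Dc (R : Type*) [CommRing R] : BN R := BNgen R BNGen.dc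
def Sb (R : Type*) [CommRing R] : BN R := BNgen R BNGen.sb
def Sc (R : Type*) [CommRing R] : BN R := BNgen R BNGen.sc

/-- `SS_• = S_∘ S_•`. -/
def SSb (R : Type*) [CommRing R] : BN R := Sc R * Sb R
/-- `SS_∘ = S_• S_∘`. -/
def SSc (R : Type*) [CommRing R] : BN R := Sb R * Sc R
/-- `G_• = SS_• − D_•`. -/
def Gb (R : Type*) [CommRing R] : BN R := SSb R - Db R
/-- `G_∘ = SS_∘ − D_∘`. -/
def Gc (R : Type*) [CommRing R] : BN R := SSc R - Dc R

end

section Aux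

variable (R : Type*) [CommRing R]

lemma bn_rel {a b : FreeAlgebra R BNGen} (h : BNRel R a b) :
    RingQuot.mkAlgHom R (BNRel R) a = RingQuot.mkAlgHom R (BNRel R) b :=
  RingQuot.mkAlgHom_rel R h

lemma eB_eB : eB R * eB R = eB R := by
  simpa [eB, BNgen, map_mul] using bn_rel R BNRel.idem_b
lemma eC_eC : eC R * eC R = eC R := by
  simpa [eC, BNgen, map_mul] using bn_rel R BNRel.idem_c
lemma eB_eC : eB R * eC R = 0 := by
  simpa [eB, eC, BNgen, map_mul] using bn_rel R BNRel.orth_bc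
lemma eC_eB : eC R * eB R = 0 := by
  simpa [eB, eC, BNgen, map_mul] using bn_rel R BNRel.orth_cb
lemma sum_idem : eB R + eC R = 1 := by
  simpa [eB, eC, BNgen, map_add] using bn_rel R BNRel.sum_idem
lemma typ_sb : eC R * Sb R * eB R = Sb R := by
  simpa [eB, eC, Sb, BNgen, map_mul] using bn_rel R BNRel.typ_sb
lemma typ_sc : eB R * Sc R * eC R = Sc R := by
  simpa [eB, eC, Sc, BNgen, map_mul] using bn_rel R BNRel.typ_sc
lemma typ_db : eB R * Db R * eB R = Db R := by
  simpa [eB, Db, BNgen, map_mul] using bn_rel R BNRel.typ_db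
lemma typ_dc : eC R * Dc R * eC R = Dc R := by
  simpa [eC, Dc, BNgen, map_mul] using bn_rel R BNRel.typ_dc
lemma Dc_Sb : Dc R * Sb R = 0 := by
  simpa [Dc, Sb, BNgen, map_mul] using bn_rel R BNRel.rel_DcSb
lemma Sb_Db : Sb R * Db R = 0 := by
  simpa [Sb, Db, BNgen, map_mul] using bn_rel R BNRel.rel_SbDb
lemma Db_Sc : Db R * Sc R = 0 := by
  simpa [Db, Sc, BNgen, map_mul] using bn_rel R BNRel.rel_DbSc
lemma Sc_Dc : Sc R * Dc R = 0 := by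
  simpa [Sc, Dc, BNgen, map_mul] using bn_rel R BNRel.rel_ScDc

-- derived one-sided typing lemmas
lemma Sb_eB : Sb R * eB R = Sb R := by
  conv_lhs => rw [← typ_sb R]
  rw [mul_assoc, mul_assoc, eB_eB, ← mul_assoc, typ_sb]
lemma eC_Sb : eC R * Sb R = Sb R := by
  conv_lhs => rw [← typ_sb R]
  rw [← mul_assoc, ← mul_assoc, eC_eC, typ_sb]
lemma Sb_eC : Sb R * eC R = 0 := by
  rw [← typ_sb R, mul_assoc, mul_assoc, eB_eC, mul_zero, mul_zero]
lemma eB_Sb : eB R * Sb R = 0 := by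
  rw [← typ_sb R, ← mul_assoc, ← mul_assoc, eB_eC, zero_mul, zero_mul]
lemma Sc_eC : Sc R * eC R = Sc R := by
  conv_lhs => rw [← typ_sc R]
  rw [mul_assoc, mul_assoc, eC_eC, ← mul_assoc, typ_sc]
lemma eB_Sc : eB R * Sc R = Sc R := by
  conv_lhs => rw [← typ_sc R]
  rw [← mul_assoc, ← mul_assoc, eB_eB, typ_sc]
lemma Sc_eB : Sc R * eB R = 0 := by
  rw [← typ_sc R, mul_assoc, mul_assoc, eC_eB, mul_zero, mul_zero]
lemma eC_Sc : eC R * Sc R = 0 := by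
  rw [← typ_sc R, ← mul_assoc, ← mul_assoc, eC_eB, zero_mul, zero_mul]
lemma Db_eB : Db R * eB R = Db R := by
  conv_lhs => rw [← typ_db R]
  rw [mul_assoc, mul_assoc, eB_eB, ← mul_assoc, typ_db]
lemma eB_Db : eB R * Db R = Db R := by
  conv_lhs => rw [← typ_db R]
  rw [← mul_assoc, ← mul_assoc, eB_eB, typ_db]
lemma Db_eC : Db R * eC R = 0 := by
  rw [← typ_db R, mul_assoc, mul_assoc, eB_eC, mul_zero, mul_zero]
lemma eC_Db : eC R * Db R = 0 := by
  rw [← typ_db R, ← mul_assoc, ← mul_assoc, eC_eB, zero_mul, zero_mul]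
lemma Dc_eC : Dc R * eC R = Dc R := by
  conv_lhs => rw [← typ_dc R]
  rw [mul_assoc, mul_assoc, eC_eC, ← mul_assoc, typ_dc]
lemma eC_Dc : eC R * Dc R = Dc R := by
  conv_lhs => rw [← typ_dc R]
  rw [← mul_assoc, ← mul_assoc, eC_eC, typ_dc]
lemma Dc_eB : Dc R * eB R = 0 := by
  rw [← typ_dc R, mul_assoc, mul_assoc, eC_eB, mul_zero, mul_zero]
lemma eB_Dc : eB R * Dc R = 0 := by
  rw [← typ_dc R, ← mul_assoc, ← mul_assoc, eB_eC, zero_mul, zero_mul]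

-- more derived nullity lemmas
lemma Sb_Sb : Sb R * Sb R = 0 := by
  nth_rw 2 [← eC_Sb R]; rw [← mul_assoc, Sb_eC, zero_mul]
lemma Sc_Sc : Sc R * Sc R = 0 := by
  nth_rw 2 [← eB_Sc R]; rw [← mul_assoc, Sc_eB, zero_mul]
lemma Db_Sb : Db R * Sb R = 0 := by
  rw [← eC_Sb R, ← mul_assoc, Db_eC, zero_mul]
lemma Sb_Dc : Sb R * Dc R = 0 := by
  rw [← eC_Dc R, ← mul_assoc, Sb_eC, zero_mul]
lemma Sc_Db : Sc R * Db R = 0 := by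
  rw [← eB_Db R, ← mul_assoc, Sc_eB, zero_mul]
lemma Dc_Sc : Dc R * Sc R = 0 := by
  rw [← eB_Sc R, ← mul_assoc, Dc_eB, zero_mul]
lemma Db_Dc : Db R * Dc R = 0 := by
  rw [← eC_Dc R, ← mul_assoc, Db_eC, zero_mul]
lemma Dc_Db : Dc R * Db R = 0 := by
  rw [← eB_Db R, ← mul_assoc, Dc_eB, zero_mul]

lemma eB_eC' (x : BN R) : eB R * (eC R * x) = 0 := by rw [← mul_assoc, eB_eC, zero_mul]
lemma eC_eB' (x : BN R) : eC R * (eB R * x) = 0 := by rw [← mul_assoc, eC_eB, zero_mul]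
lemma Sb_eC' (x : BN R) : Sb R * (eC R * x) = 0 := by rw [← mul_assoc, Sb_eC, zero_mul]
lemma eB_Sb' (x : BN R) : eB R * (Sb R * x) = 0 := by rw [← mul_assoc, eB_Sb, zero_mul]
lemma Sc_eB' (x : BN R) : Sc R * (eB R * x) = 0 := by rw [← mul_assoc, Sc_eB, zero_mul]
lemma eC_Sc' (x : BN R) : eC R * (Sc R * x) = 0 := by rw [← mul_assoc, eC_Sc, zero_mul]
lemma Db_eC' (x : BN R) : Db R * (eC R * x) = 0 := by rw [← mul_assoc, Db_eC, zero_mul]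
lemma eC_Db' (x : BN R) : eC R * (Db R * x) = 0 := by rw [← mul_assoc, eC_Db, zero_mul]
lemma Dc_eB' (x : BN R) : Dc R * (eB R * x) = 0 := by rw [← mul_assoc, Dc_eB, zero_mul]
lemma eB_Dc' (x : BN R) : eB R * (Dc R * x) = 0 := by rw [← mul_assoc, eB_Dc, zero_mul]
lemma Dc_Sb' (x : BN R) : Dc R * (Sb R * x) = 0 := by rw [← mul_assoc, Dc_Sb, zero_mul]
lemma Sb_Db' (x : BN R) : Sb R * (Db R * x) = 0 := by rw [← mul_assoc, Sb_Db, zero_mul]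
lemma Db_Sc' (x : BN R) : Db R * (Sc R * x) = 0 := by rw [← mul_assoc, Db_Sc, zero_mul]
lemma Sc_Dc' (x : BN R) : Sc R * (Dc R * x) = 0 := by rw [← mul_assoc, Sc_Dc, zero_mul]
lemma Sb_Sb' (x : BN R) : Sb R * (Sb R * x) = 0 := by rw [← mul_assoc, Sb_Sb, zero_mul]
lemma Sc_Sc' (x : BN R) : Sc R * (Sc R * x) = 0 := by rw [← mul_assoc, Sc_Sc, zero_mul]
lemma Db_Sb' (x : BN R) : Db R * (Sb R * x) = 0 := by rw [← mul_assoc, Db_Sb, zero_mul]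
lemma Sb_Dc' (x : BN R) : Sb R * (Dc R * x) = 0 := by rw [← mul_assoc, Sb_Dc, zero_mul]
lemma Sc_Db' (x : BN R) : Sc R * (Db R * x) = 0 := by rw [← mul_assoc, Sc_Db, zero_mul]
lemma Dc_Sc' (x : BN R) : Dc R * (Sc R * x) = 0 := by rw [← mul_assoc, Dc_Sc, zero_mul]
lemma Db_Dc' (x : BN R) : Db R * (Dc R * x) = 0 := by rw [← mul_assoc, Db_Dc, zero_mul]
lemma Dc_Db' (x : BN R) : Dc R * (Db R * x) = 0 := by rw [← mul_assoc, Dc_Db, zero_mul]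
lemma eB_eB' (x : BN R) : eB R * (eB R * x) = eB R * x := by rw [← mul_assoc, eB_eB]
lemma eC_eC' (x : BN R) : eC R * (eC R * x) = eC R * x := by rw [← mul_assoc, eC_eC]
lemma Sb_eB' (x : BN R) : Sb R * (eB R * x) = Sb R * x := by rw [← mul_assoc, Sb_eB]
lemma Sc_eC' (x : BN R) : Sc R * (eC R * x) = Sc R * x := by rw [← mul_assoc, Sc_eC]
lemma Db_eB' (x : BN R) : Db R * (eB R * x) = Db R * x := by rw [← mul_assoc, Db_eB]
lemma Dc_eC' (x : BN R) : Dc R * (eC R * x) = Dc R * x := by rw [← mul_assoc, Dc_eC]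
lemma eC_Sb' (x : BN R) : eC R * (Sb R * x) = Sb R * x := by rw [← mul_assoc, eC_Sb]
lemma eB_Sc' (x : BN R) : eB R * (Sc R * x) = Sc R * x := by rw [← mul_assoc, eB_Sc]
lemma eB_Db' (x : BN R) : eB R * (Db R * x) = Db R * x := by rw [← mul_assoc, eB_Db]
lemma eC_Dc' (x : BN R) : eC R * (Dc R * x) = Dc R * x := by rw [← mul_assoc, eC_Dc]

/-- The central element `T = G_• + G_∘`. -/
noncomputable def Tc : BN R := Gb R + Gc R

attribute [local simp] eB_eB eC_eC eB_eC eC_eB Sb_eB eC_Sb Sb_eC eB_Sb Sc_eC eB_Sc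
  Sc_eB eC_Sc Db_eB eB_Db Db_eC eC_Db Dc_eC eC_Dc Dc_eB eB_Dc
  Dc_Sb Sb_Db Db_Sc Sc_Dc Sb_Sb Sc_Sc Db_Sb Sb_Dc Sc_Db Dc_Sc Db_Dc Dc_Db
  eB_eC' eC_eB' Sb_eC' eB_Sb' Sc_eB' eC_Sc' Db_eC' eC_Db' Dc_eB' eB_Dc' Dc_Sb' Sb_Db' Db_Sc' Sc_Dc' Sb_Sb' Sc_Sc' Db_Sb' Sb_Dc' Sc_Db' Dc_Sc' Db_Dc' Dc_Db' eB_eB' eC_eC' Sb_eB' Sc_eC' Db_eB' Dc_eC' eC_Sb' eB_Sc' eB_Db' eC_Dc'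
  mul_assoc mul_add add_mul mul_sub sub_mul

lemma Tc_eB : Tc R * eB R = Gb R := by
  simp [Tc, Gb, Gc, SSb, SSc, add_mul, sub_mul, mul_assoc]
lemma eB_Tc : eB R * Tc R = Gb R := by
  simp [Tc, Gb, Gc, SSb, SSc, mul_add, mul_sub, ← mul_assoc]
lemma Tc_eC : Tc R * eC R = Gc R := by
  simp [Tc, Gb, Gc, SSb, SSc, add_mul, sub_mul, mul_assoc]
lemma eC_Tc : eC R * Tc R = Gc R := by
  simp [Tc, Gb, Gc, SSb, SSc, mul_add, mul_sub, ← mul_assoc]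

lemma Tc_central : ∀ y : BN R, Tc R * y = y * Tc R := by
  have hsurj := RingQuot.mkAlgHom_surjective R (BNRel R)
  intro y
  obtain ⟨a, rfl⟩ := hsurj y
  induction a using FreeAlgebra.induction with
  | grade0 r =>
    rw [AlgHom.commutes]
    exact (Algebra.commutes r _).symm
  | grade1 g =>
    cases g with
    | eb => show Tc R * eB R = eB R * Tc R; rw [Tc_eB, eB_Tc]
    | ec => show Tc R * eC R = eC R * Tc R; rw [Tc_eC, eC_Tc]
    | db => show Tc R * Db R = Db R * Tc R; simp [Tc, Gb, Gc, SSb, SSc]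
    | dc => show Tc R * Dc R = Dc R * Tc R; simp [Tc, Gb, Gc, SSb, SSc]
    | sb => show Tc R * Sb R = Sb R * Tc R; simp [Tc, Gb, Gc, SSb, SSc]
    | sc => show Tc R * Sc R = Sc R * Tc R; simp [Tc, Gb, Gc, SSb, SSc]
  | mul a b ha hb =>
    rw [map_mul, ← mul_assoc, ha, mul_assoc, hb, mul_assoc]
  | add a b ha hb =>
    rw [map_add, mul_add, add_mul, ha, hb]

lemma Tc_gen (g : BNGen) :
    Tc R * BNgen R g = BNgen R g * Tc R :=
  Tc_central R _

lemma GcSb : Gc R * Sb R = Sb R * Gb R := by simp [Gb, Gc, SSb, SSc]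
lemma GbSc : Gb R * Sc R = Sc R * Gc R := by simp [Gb, Gc, SSb, SSc]
lemma GbDb : Gb R * Db R = Db R * Gb R := by simp [Gb, SSb]
lemma DbGb : Db R * Gb R = -(Db R * Db R) := by simp [Gb, SSb]
lemma GcDc : Gc R * Dc R = Dc R * Gc R := by simp [Gc, SSc]
lemma DcGc : Dc R * Gc R = -(Dc R * Dc R) := by simp [Gc, SSc]

end Aux

/-- In `B`: `G_∘S_• = S_•G_•`, `G_•S_∘ = S_∘G_∘`, `G_•D_• = D_•G_• = −D_•D_•`,
`G_∘D_∘ = D_∘G_∘ = −D_∘D_∘`; in particular `G_•` commutes with every element of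
`1_•B1_•` and `G_∘` commutes with every element of `1_∘B1_∘`. -/
theorem statement2 (R : Type*) [CommRing R] :
    Gc R * Sb R = Sb R * Gb R ∧
    Gb R * Sc R = Sc R * Gc R ∧
    Gb R * Db R = Db R * Gb R ∧ Db R * Gb R = -(Db R * Db R) ∧
    Gc R * Dc R = Dc R * Gc R ∧ Dc R * Gc R = -(Dc R * Dc R) ∧
    (∀ x : BN R, eB R * x * eB R = x → Gb R * x = x * Gb R) ∧
    (∀ x : BN R, eC R * x * eC R = x → Gc R * x = x * Gc R) := by
  refine ⟨GcSb R, GbSc R, GbDb R, DbGb R, GcDc R, DcGc R,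
    fun x hx => ?_, fun x hx => ?_⟩
  · have h1 : eB R * x = x := by rw [← hx, ← mul_assoc, ← mul_assoc, eB_eB]
    have h2 : x * eB R = x := by rw [← hx, mul_assoc, eB_eB]
    calc Gb R * x = Tc R * (eB R * x) := by rw [← Tc_eB, mul_assoc]
      _ = Tc R * x := by rw [h1]
      _ = x * Tc R := Tc_central R x
      _ = x * eB R * Tc R := by rw [h2]
      _ = x * Gb R := by rw [mul_assoc, eB_Tc]
  · have h1 : eC R * x = x := by rw [← hx, ← mul_assoc, ← mul_assoc, eC_eC]
    have h2 : x * eC R = x := by rw [← hx, mul_assoc, eC_eC]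
    calc Gc R * x = Tc R * (eC R * x) := by rw [← Tc_eC, mul_assoc]
      _ = Tc R * x := by rw [h1]
      _ = x * Tc R := Tc_central R x
      _ = x * eC R * Tc R := by rw [h2]
      _ = x * Gc R := by rw [mul_assoc, eC_Tc]
end

section
/- For every integer k ≥ 1, the identity (SS_• + D_•)^k = SS_•^k + D_•^k holds in B; moreover (SS_• + D_•)^k = G_•^k when k is even and (SS_• + D_•)^k = G_•^{k−1}(SS_• + D_•) when k is odd, and the analogous identities hold with ∘ in place of • throughout. -/
lemma aux_pow_mul {A : Type*} [Ring A] {x y : A} (h : x * y = 0) :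
    ∀ n, x ^ (n + 1) * y = 0 := by
  intro n
  induction n with
  | zero => simpa using h
  | succ n ih => rw [pow_succ', mul_assoc, ih, mul_zero]

lemma aux_add_pow {A : Type*} [Ring A] {x y : A} (hxy : x * y = 0) (hyx : y * x = 0) :
    ∀ n, (x + y) ^ (n + 1) = x ^ (n + 1) + y ^ (n + 1) := by
  intro n
  induction n with
  | zero => simp
  | succ n ih =>
    rw [pow_succ _ (n + 1), ih, add_mul, mul_add, mul_add, aux_pow_mul hxy, aux_pow_mul hyx,
      ← pow_succ, ← pow_succ]
    abel

lemma aux_main {A : Type*} [Ring A] {x y : A} (hxy : x * y = 0) (hyx : y * x = 0)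
    (k : ℕ) (hk : 1 ≤ k) :
    (x + y) ^ k = x ^ k + y ^ k ∧
      (Even k → (x + y) ^ k = (x - y) ^ k) ∧
      (Odd k → (x + y) ^ k = (x - y) ^ (k - 1) * (x + y)) := by
  have hxy' : x * (-y) = 0 := by rw [mul_neg, hxy, neg_zero]
  have hyx' : (-y) * x = 0 := by rw [neg_mul, hyx, neg_zero]
  obtain ⟨n, rfl⟩ : ∃ n, k = n + 1 := ⟨k - 1, (Nat.succ_pred_eq_of_pos hk).symm⟩
  have hsub : ∀ m, (x - y) ^ (m + 1) = x ^ (m + 1) + (-y) ^ (m + 1) := by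
    intro m
    rw [sub_eq_add_neg]
    exact aux_add_pow hxy' hyx' m
  refine ⟨aux_add_pow hxy hyx n, ?_, ?_⟩
  · intro he
    rw [aux_add_pow hxy hyx, hsub, he.neg_pow]
  · intro ho
    rcases n with _ | m
    · simp
    · have hev : Even (m + 1) := by
        simpa [Nat.even_add_one, Nat.odd_add_one] using ho
      have h1 : (x - y) ^ (m + 1 + 1 - 1) = x ^ (m + 1) + y ^ (m + 1) := by
        have := hsub m
        rw [hev.neg_pow] at this
        simpa using this
      rw [aux_add_pow hxy hyx, h1, add_mul, mul_add, mul_add, aux_pow_mul hxy,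
        aux_pow_mul hyx, ← pow_succ, ← pow_succ]
      abel

/-- For every `k ≥ 1`, `(SS_• + D_•)^k = SS_•^k + D_•^k` holds in `B`; moreover
`(SS_• + D_•)^k = G_•^k` when `k` is even and `(SS_• + D_•)^k = G_•^{k−1}(SS_• + D_•)`
when `k` is odd; and the analogous identities hold with `∘` in place of `•`. -/
theorem statement6 (R : Type*) [CommRing R] (k : ℕ) (hk : 1 ≤ k) :
    ((SSb R + Db R) ^ k = SSb R ^ k + Db R ^ k ∧
      (Even k → (SSb R + Db R) ^ k = Gb R ^ k) ∧
      (Odd k → (SSb R + Db R) ^ k = Gb R ^ (k - 1) * (SSb R + Db R))) ∧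
    ((SSc R + Dc R) ^ k = SSc R ^ k + Dc R ^ k ∧
      (Even k → (SSc R + Dc R) ^ k = Gc R ^ k) ∧
      (Odd k → (SSc R + Dc R) ^ k = Gc R ^ (k - 1) * (SSc R + Dc R))) := by
  have hDbSc : Db R * Sc R = 0 := by
    have := RingQuot.mkAlgHom_rel R (BNRel.rel_DbSc (R := R))
    simpa [Db, Sc, BNgen] using this
  have hSbDb : Sb R * Db R = 0 := by
    have := RingQuot.mkAlgHom_rel R (BNRel.rel_SbDb (R := R))
    simpa [Sb, Db, BNgen] using this
  have hDcSb : Dc R * Sb R = 0 := by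
    have := RingQuot.mkAlgHom_rel R (BNRel.rel_DcSb (R := R))
    simpa [Dc, Sb, BNgen] using this
  have hScDc : Sc R * Dc R = 0 := by
    have := RingQuot.mkAlgHom_rel R (BNRel.rel_ScDc (R := R))
    simpa [Sc, Dc, BNgen] using this
  have hb1 : SSb R * Db R = 0 := by rw [SSb, mul_assoc, hSbDb, mul_zero]
  have hb2 : Db R * SSb R = 0 := by rw [SSb, ← mul_assoc, hDbSc, zero_mul]
  have hc1 : SSc R * Dc R = 0 := by rw [SSc, mul_assoc, hScDc, mul_zero]
  have hc2 : Dc R * SSc R = 0 := by rw [SSc, ← mul_assoc, hDcSb, zero_mul]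
  constructor
  · simpa [Gb] using aux_main hb1 hb2 k hk
  · simpa [Gc] using aux_main hc1 hc2 k hk
end
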